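/- Let w = φ^ω(1) where φ is the bidimensional binary morphism of size 2 with φ(1)_{0,0}=1, φ(1)_{1,0}=1, φ(1)_{0,1}=1, φ(1)_{1,1}=0, and φ(0)_{0,0}=0 (Case 4 of the paper, with φ(1) = [[1,0],[1,1]] in matrix display). Then for every n ∈ ℕ and every j ∈ {1,…,2^n−1}, w(j(2^n−1), j) = 0. In particular the factor 0^{2^n−1} occurs along the direction (2^n−1, 1) for every n, and w is not SURD. -/

import Mathlib

/-- The word along direction `q` with respect to size `t` in a `d`-dimensional word `w`. -/
def dirWord {d : ℕ} {A : Type*} (w : (Fin d → ℕ) → A) (q t : Fin d → ℕ) :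
    ℕ → ({i : Fin d → ℕ // ∀ j, i j < t j} → A) :=
  fun ℓ i => w (fun j => i.1 j + ℓ * q j)

/-- Strongly uniformly recurrent along all directions. -/
def IsSURD {d : ℕ} {A : Type*} (w : (Fin d → ℕ) → A) : Prop :=
  ∀ t : Fin d → ℕ, ∃ b : ℕ, ∀ q : Fin d → ℕ, Finset.univ.gcd q = 1 →
    ∀ m : ℕ, ∃ k : ℕ, m ≤ k ∧ k < m + b ∧
      dirWord w q t k = dirWord w q t 0

theorem stmt_18 (φ : Fin 2 → Fin 2 → Fin 2 → Fin 2)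
    (h100 : φ 1 0 0 = 1) (h110 : φ 1 1 0 = 1) (h101 : φ 1 0 1 = 1) (h111 : φ 1 1 1 = 0)
    (h000 : φ 0 0 0 = 0)
    (w : ℕ → ℕ → Fin 2) (hw0 : w 0 0 = 1)
    (hfix : ∀ (x y : ℕ) (i j : Fin 2),
      w (2 * x + (i : ℕ)) (2 * y + (j : ℕ)) = φ (w x y) i j) :
    (∀ n : ℕ, ∀ j : ℕ, 1 ≤ j → j < 2 ^ n → w (j * (2 ^ n - 1)) j = 0) ∧
    ¬ IsSURD (fun v : Fin 2 → ℕ => w (v 0) (v 1)) := by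
  -- bottom row is constant 1
  have hrow : ∀ x, w x 0 = 1 := by
    intro x
    induction x using Nat.strong_induction_on with
    | _ x ih =>
      rcases Nat.eq_zero_or_pos x with h | h
      · simpa [h] using hw0
      · have hx2 : x / 2 < x := Nat.div_lt_self h (by norm_num)
        have hm : x % 2 < 2 := Nat.mod_lt _ (by norm_num)
        have h1 := hfix (x / 2) 0 ⟨x % 2, hm⟩ 0
        rw [ih (x / 2) hx2] at h1
        have hx : 2 * (x / 2) + ((⟨x % 2, hm⟩ : Fin 2) : ℕ) = x := by
          simp only [Fin.val_mk]; omega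
        have h0 : 2 * 0 + ((0 : Fin 2) : ℕ) = 0 := rfl
        rw [hx, h0] at h1
        rw [h1]
        have : x % 2 = 0 ∨ x % 2 = 1 := by omega
        rcases this with h' | h'
        · have : (⟨x % 2, hm⟩ : Fin 2) = 0 := by simp [h']
          rw [this, h100]
        · have : (⟨x % 2, hm⟩ : Fin 2) = 1 := by simp [h']
          rw [this, h110]
  -- the anti-diagonal of weight 2^n - 1 inside a 1-block is all 1
  have hD : ∀ n X Y, w X Y = 1 → ∀ a, a < 2 ^ n →
      w (2 ^ n * X + (2 ^ n - 1 - a)) (2 ^ n * Y + a) = 1 := by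
    intro n
    induction n with
    | zero =>
      intro X Y h a ha
      interval_cases a
      simpa using h
    | succ n ih =>
      intro X Y h a ha
      have h2 : (2 : ℕ) ^ (n + 1) = 2 * 2 ^ n := by ring
      have h1 : 1 ≤ (2 : ℕ) ^ n := Nat.one_le_two_pow
      have hc : a / 2 < 2 ^ n := by omega
      have inner := ih X Y h (a / 2) hc
      have hXr : (2 : ℕ) ^ (n + 1) * X = 2 * (2 ^ n * X) := by ring
      have hYr : (2 : ℕ) ^ (n + 1) * Y = 2 * (2 ^ n * Y) := by ring
      rcases (by omega : a % 2 = 0 ∨ a % 2 = 1) with h' | h'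
      · have hfx := hfix (2 ^ n * X + (2 ^ n - 1 - a / 2)) (2 ^ n * Y + a / 2) 1 0
        rw [inner, h110] at hfx
        simp only [Fin.val_one, Fin.val_zero] at hfx
        have e1 : 2 ^ (n + 1) * X + (2 ^ (n + 1) - 1 - a)
            = 2 * (2 ^ n * X + (2 ^ n - 1 - a / 2)) + 1 := by rw [hXr]; omega
        have e2 : 2 ^ (n + 1) * Y + a = 2 * (2 ^ n * Y + a / 2) + 0 := by rw [hYr]; omega
        rw [e1, e2, hfx]
      · have hfx := hfix (2 ^ n * X + (2 ^ n - 1 - a / 2)) (2 ^ n * Y + a / 2) 0 1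
        rw [inner, h101] at hfx
        simp only [Fin.val_one, Fin.val_zero] at hfx
        have e1 : 2 ^ (n + 1) * X + (2 ^ (n + 1) - 1 - a)
            = 2 * (2 ^ n * X + (2 ^ n - 1 - a / 2)) + 0 := by rw [hXr]; omega
        have e2 : 2 ^ (n + 1) * Y + a = 2 * (2 ^ n * Y + a / 2) + 1 := by rw [hYr]; omega
        rw [e1, e2, hfx]
  -- the anti-diagonal of weight 2^n inside a 1-block is all 0
  have hB : ∀ n X Y, w X Y = 1 → ∀ j, 1 ≤ j → j < 2 ^ n →
      w (2 ^ n * X + (2 ^ n - j)) (2 ^ n * Y + j) = 0 := by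
    intro n
    induction n with
    | zero => intro X Y h j hj1 hj2; omega
    | succ n ih =>
      intro X Y h j hj1 hj2
      have h2 : (2 : ℕ) ^ (n + 1) = 2 * 2 ^ n := by ring
      have h1 : 1 ≤ (2 : ℕ) ^ n := Nat.one_le_two_pow
      have hXr : (2 : ℕ) ^ (n + 1) * X = 2 * (2 ^ n * X) := by ring
      have hYr : (2 : ℕ) ^ (n + 1) * Y = 2 * (2 ^ n * Y) := by ring
      rcases (by omega : j % 2 = 0 ∨ j % 2 = 1) with h' | h'
      · -- j even : use induction hypothesis and φ(0)(0,0) = 0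
        have hc1 : 1 ≤ j / 2 := by omega
        have hc2 : j / 2 < 2 ^ n := by omega
        have inner := ih X Y h (j / 2) hc1 hc2
        have hfx := hfix (2 ^ n * X + (2 ^ n - j / 2)) (2 ^ n * Y + j / 2) 0 0
        rw [inner, h000] at hfx
        simp only [Fin.val_zero] at hfx
        have e1 : 2 ^ (n + 1) * X + (2 ^ (n + 1) - j)
            = 2 * (2 ^ n * X + (2 ^ n - j / 2)) + 0 := by rw [hXr]; omega
        have e2 : 2 ^ (n + 1) * Y + j = 2 * (2 ^ n * Y + j / 2) + 0 := by rw [hYr]; omega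
        rw [e1, e2, hfx]
      · -- j odd : use hD and φ(1)(1,1) = 0
        have hc : j / 2 < 2 ^ n := by omega
        have inner := hD n X Y h (j / 2) hc
        have hfx := hfix (2 ^ n * X + (2 ^ n - 1 - j / 2)) (2 ^ n * Y + j / 2) 1 1
        rw [inner, h111] at hfx
        simp only [Fin.val_one] at hfx
        have e1 : 2 ^ (n + 1) * X + (2 ^ (n + 1) - j)
            = 2 * (2 ^ n * X + (2 ^ n - 1 - j / 2)) + 1 := by rw [hXr]; omega
        have e2 : 2 ^ (n + 1) * Y + j = 2 * (2 ^ n * Y + j / 2) + 1 := by rw [hYr]; omega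
        rw [e1, e2, hfx]
  have main : ∀ n : ℕ, ∀ j : ℕ, 1 ≤ j → j < 2 ^ n → w (j * (2 ^ n - 1)) j = 0 := by
    intro n j hj1 hj2
    have h1 : 1 ≤ (2 : ℕ) ^ n := Nat.one_le_two_pow
    have hb := hB n (j - 1) 0 (hrow (j - 1)) j hj1 hj2
    have e1 : 2 ^ n * (j - 1) + (2 ^ n - j) = j * (2 ^ n - 1) := by
      have h2 : j ≤ 2 ^ n := hj2.le
      zify [h1, h2, hj1]
      ring
    have e2 : 2 ^ n * 0 + j = j := by omega
    rw [e1, e2] at hb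
    exact hb
  refine ⟨main, ?_⟩
  intro hs
  obtain ⟨b, hb⟩ := hs (fun _ => 1)
  set n := b + 1 with hn
  have hq : Finset.univ.gcd (![2 ^ n - 1, 1] : Fin 2 → ℕ) = 1 := by
    have hdvd : Finset.univ.gcd (![2 ^ n - 1, 1] : Fin 2 → ℕ) ∣ 1 := by
      have := Finset.gcd_dvd (f := (![2 ^ n - 1, 1] : Fin 2 → ℕ))
        (Finset.mem_univ (1 : Fin 2))
      simpa using this
    exact Nat.dvd_one.mp hdvd
  obtain ⟨k, hk1, hk2, hk3⟩ := hb (![2 ^ n - 1, 1]) hq 1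
  have hkn : k < 2 ^ n := by
    have : n < 2 ^ n := Nat.lt_two_pow_self
    omega
  have hzero := main n k hk1 hkn
  have happ := congrFun hk3 ⟨fun _ => 0, fun j => by norm_num⟩
  simp only [dirWord] at happ
  -- happ : w (0 + k * (2^n - 1)) (0 + k * 1) = w (0 + 0) (0 + 0)
  have : w (k * (2 ^ n - 1)) k = w 0 0 := by
    simpa [Matrix.cons_val_zero, Matrix.cons_val_one] using happ
  rw [hzero, hw0] at this
  exact absurd this (by decide)
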